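/- Let 0 < α < β < ∞, let μ : ℝ → ℝ be continuous and nonnegative, let φ : [0,∞) → ℝ be locally integrable, and let b : [0,∞)×[0,∞) → ℝ be continuous with b(a,t) = 0 for a ∉ [α,β]. Set π(a) = exp(−∫₀^a μ(s) ds), b̄(a,t) = b(a,t)·π(a), φ̄(a) = φ(a)/π(a). Then there exists a continuous function B : [0,∞) → ℝ satisfying the Lotka renewal integral equation B(t) = ∫₀^t b̄(a,t)·B(t−a) da + ∫_t^∞ b̄(a,t)·φ̄(a−t) da for all t ≥ 0, and every such solution satisfies B(t) = ∫_α^β b̄(c,t)·φ̄(c−t) dc for t ∈ [0,α]. -/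

import Mathlib

open MeasureTheory Real Set

/-- there exists a continuous solution `B : [0,∞) → ℝ` of the
Lotka renewal integral equation
`B(t) = ∫₀^t b̄(a,t)·B(t−a) da + ∫_t^∞ b̄(a,t)·φ̄(a−t) da`, and every such
continuous solution satisfies `B(t) = ∫_α^β b̄(c,t)·φ̄(c−t) dc` on `[0,α]`. -/
theorem lotka_renewal_equation_existence_and_initial_segment
    (α β : ℝ) (hα : 0 < α) (hαβ : α < β)
    (μ : ℝ → ℝ) (hμc : Continuous μ) (hμ0 : ∀ x, 0 ≤ μ x)
    (φ : ℝ → ℝ) (hφ : MeasureTheory.LocallyIntegrableOn φ (Set.Ici 0) volume)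
    (b : ℝ → ℝ → ℝ) (hbc : Continuous fun p : ℝ × ℝ => b p.1 p.2)
    (hbsupp : ∀ a t, 0 ≤ t → a ∉ Set.Icc α β → b a t = 0)
    (pi : ℝ → ℝ) (hpi : ∀ a, pi a = Real.exp (-(∫ s in (0:ℝ)..a, μ s)))
    (bbar : ℝ → ℝ → ℝ) (hbbar : ∀ a t, bbar a t = b a t * pi a)
    (φbar : ℝ → ℝ) (hφbar : ∀ a, φbar a = φ a / pi a) :
    (∃ B : ℝ → ℝ, ContinuousOn B (Set.Ici 0) ∧
      ∀ t : ℝ, 0 ≤ t →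
        B t = (∫ a in (0:ℝ)..t, bbar a t * B (t - a)) +
          ∫ a in Set.Ici t, bbar a t * φbar (a - t)) ∧
    (∀ B : ℝ → ℝ, ContinuousOn B (Set.Ici 0) →
      (∀ t : ℝ, 0 ≤ t →
        B t = (∫ a in (0:ℝ)..t, bbar a t * B (t - a)) +
          ∫ a in Set.Ici t, bbar a t * φbar (a - t)) →
      ∀ t ∈ Set.Icc (0:ℝ) α, B t = ∫ c in α..β, bbar c t * φbar (c - t)) := by
  -- continuity and positivity of `pi`
  have hpic : Continuous pi := by
    have h1 : Continuous fun a => ∫ s in (0:ℝ)..a, μ s :=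
      intervalIntegral.continuous_primitive (fun a b => hμc.intervalIntegrable a b) 0
    have : pi = fun a => Real.exp (-(∫ s in (0:ℝ)..a, μ s)) := funext hpi
    rw [this]; exact Real.continuous_exp.comp h1.neg
  have hpipos : ∀ a, 0 < pi a := fun a => by rw [hpi]; exact Real.exp_pos _
  -- joint continuity of `bbar` and its support property
  have hbbarc : Continuous fun p : ℝ × ℝ => bbar p.1 p.2 := by
    have : (fun p : ℝ × ℝ => bbar p.1 p.2) = fun p : ℝ × ℝ => b p.1 p.2 * pi p.1 := by
      funext p; rw [hbbar]
    rw [this]; exact hbc.mul (hpic.comp continuous_fst)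
  have hbbar0 : ∀ a t, 0 ≤ t → a ∉ Set.Icc α β → bbar a t = 0 := fun a t ht ha => by
    rw [hbbar, hbsupp a t ht ha, zero_mul]
  -- measurability / integrability of `φbar`
  have hφbar_eq : φbar = fun a => φ a * (pi a)⁻¹ := funext fun a => by
    rw [hφbar, div_eq_mul_inv]
  have hφm : AEStronglyMeasurable φbar (volume.restrict (Ici (0:ℝ))) := by
    rw [hφbar_eq]
    exact hφ.aestronglyMeasurable.mul
      ((hpic.inv₀ fun a => (hpipos a).ne').aestronglyMeasurable)
  have hφint : IntegrableOn φbar (Icc (0:ℝ) β) := by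
    rw [hφbar_eq]
    exact (hφ.integrableOn_compact_subset (Icc_subset_Ici_self) isCompact_Icc).mul_continuousOn
      ((hpic.inv₀ fun a => (hpipos a).ne').continuousOn) isCompact_Icc
  -- the inhomogeneous term
  set g : ℝ → ℝ := fun t => ∫ c in Ici (0:ℝ), bbar (c + t) t * φbar c with hg
  have hshift : ∀ t : ℝ, ∫ a in Ici t, bbar a t * φbar (a - t) = g t := by
    intro t
    have h := (measurePreserving_add_right volume t).setIntegral_image_emb
      (measurableEmbedding_addRight t) (fun a => bbar a t * φbar (a - t)) (Ici 0)
    simpa using h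
  -- continuity of `g` on `[0,∞)` by dominated convergence
  have hgc : ContinuousOn g (Ici (0:ℝ)) := by
    intro t₀ ht₀
    obtain ⟨M, hM⟩ := IsCompact.exists_bound_of_continuousOn
      (isCompact_Icc.prod (isCompact_Icc : IsCompact (Icc (0:ℝ) (t₀ + 1))))
      ((hbbarc.continuousOn) : ContinuousOn _ (Icc α β ×ˢ Icc 0 (t₀ + 1)))
    apply continuousWithinAt_of_dominated
      (bound := (Icc (0:ℝ) β).indicator fun c => (max M 0) * ‖φbar c‖)
    · filter_upwards with t
      exact ((hbbarc.comp ((continuous_id.add continuous_const).prodMk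
        continuous_const)).aestronglyMeasurable).mul hφm
    · have hIic : ∀ᶠ t in nhdsWithin t₀ (Ici (0:ℝ)), t ≤ t₀ + 1 :=
        eventually_nhdsWithin_of_eventually_nhds
          (Filter.Tendsto.eventually_le_const (by linarith) Filter.tendsto_id)
      filter_upwards [hIic, self_mem_nhdsWithin] with t ht1 ht0
      filter_upwards [ae_restrict_mem measurableSet_Ici] with c hc
      by_cases hcb : c + t ∈ Icc α β
      · have hc2 : c ∈ Icc (0:ℝ) β := ⟨hc, by
          have h3 := hcb.2
          have h4 : (0:ℝ) ≤ t := ht0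
          linarith⟩
        rw [indicator_of_mem hc2, norm_mul]
        have hb1 : ‖bbar (c + t) t‖ ≤ max M 0 :=
          le_max_of_le_left (hM (c + t, t) ⟨hcb, ⟨ht0, ht1⟩⟩)
        exact mul_le_mul_of_nonneg_right hb1 (norm_nonneg _)
      · rw [hbbar0 _ _ ht0 hcb, zero_mul, norm_zero]
        exact indicator_nonneg (fun c _ => by positivity) c
    · rw [integrable_indicator_iff measurableSet_Icc]
      have h2 : (volume.restrict (Ici (0:ℝ))).restrict (Icc (0:ℝ) β) =
          volume.restrict (Icc (0:ℝ) β) := by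
        rw [Measure.restrict_restrict measurableSet_Icc,
          inter_eq_self_of_subset_left (fun x hx => hx.1)]
      rw [IntegrableOn, h2]
      exact hφint.norm.const_mul _
    · filter_upwards with c
      exact (((hbbarc.comp ((continuous_const.add continuous_id).prodMk
        continuous_id)).mul continuous_const).continuousWithinAt)
  -- the Picard operator, truncated at 0
  set Φ : (ℝ → ℝ) → ℝ → ℝ := fun C t =>
    (∫ a in (0:ℝ)..(max t 0), bbar a (max t 0) * C (max t 0 - a)) + g (max t 0) with hΦ
  have hmaxc : Continuous fun t : ℝ => max t 0 := continuous_id.max continuous_const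
  have hΦc : ∀ C : ℝ → ℝ, Continuous C → Continuous (Φ C) := by
    intro C hC
    have h1 : Continuous fun T : ℝ => ∫ a in (0:ℝ)..T, bbar a T * C (T - a) := by
      apply intervalIntegral.continuous_parametric_intervalIntegral_of_continuous
        (f := fun T a => bbar a T * C (T - a)) ?_ continuous_id
      exact ((hbbarc.comp (continuous_snd.prodMk continuous_fst)).mul
        (hC.comp (continuous_fst.sub continuous_snd)))
    exact (h1.comp hmaxc).add (hgc.comp_continuous hmaxc fun t => le_max_right t 0)
  have hΦcongr : ∀ (n : ℕ) (C D : ℝ → ℝ),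
      (∀ s ∈ Icc (0:ℝ) ((n:ℝ) * α), C s = D s) →
      ∀ t ≤ ((n:ℝ) + 1) * α, Φ C t = Φ D t := by
    intro n C D h t ht
    have hT0 : (0:ℝ) ≤ max t 0 := le_max_right t 0
    have hTle : max t 0 ≤ ((n:ℝ) + 1) * α := by
      apply max_le ht
      positivity
    simp only [hΦ]
    congr 1
    apply intervalIntegral.integral_congr
    intro a ha
    rw [uIcc_of_le hT0] at ha
    simp only
    by_cases haα : a < α
    · rw [hbbar0 a _ hT0 (fun hmem => absurd hmem.1 (not_le.2 haα)), zero_mul, zero_mul]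
    · push_neg at haα
      rw [h (max t 0 - a) ⟨by linarith [ha.2], by
        have := ha.2
        nlinarith [hTle, haα]⟩]
  -- iterates
  set Bn : ℕ → ℝ → ℝ := fun n => Φ^[n] (fun _ => 0) with hBn
  have hBn_succ : ∀ n, Bn (n + 1) = Φ (Bn n) := fun n => Function.iterate_succ_apply' Φ n _
  have hBnc : ∀ n, Continuous (Bn n) := by
    intro n
    induction n with
    | zero => exact continuous_const
    | succ n ih => rw [hBn_succ]; exact hΦc _ ih
  have hΦ0 : ∀ C : ℝ → ℝ, Φ C 0 = g 0 := by
    intro C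
    simp only [hΦ, max_self, intervalIntegral.integral_same, zero_add]
  have hstab : ∀ n : ℕ, ∀ t ∈ Icc (0:ℝ) ((n:ℝ) * α), Bn (n + 1) t = Bn (n + 2) t := by
    intro n
    induction n with
    | zero =>
      intro t ht
      simp only [Nat.cast_zero, zero_mul, Icc_self, mem_singleton_iff] at ht
      subst ht
      rw [hBn_succ, hBn_succ, hΦ0, hΦ0]
    | succ n ih =>
      intro t ht
      have e1 : Bn (n + 1 + 1) = Φ (Bn (n + 1)) := hBn_succ (n + 1)
      have e2 : Bn (n + 1 + 2) = Φ (Bn (n + 2)) := hBn_succ (n + 2)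
      rw [e1, e2]
      apply hΦcongr n (Bn (n + 1)) (Bn (n + 2)) ih t
      have := ht.2
      push_cast at this ⊢
      linarith
  have hchain : ∀ n m : ℕ, n ≤ m → ∀ t ∈ Icc (0:ℝ) ((n:ℝ) * α),
      Bn (n + 1) t = Bn (m + 1) t := by
    intro n m hnm
    induction m, hnm using Nat.le_induction with
    | base => intro t _; rfl
    | succ m hnm ih =>
      intro t ht
      rw [ih t ht]
      exact hstab m t ⟨ht.1, le_trans ht.2 (by
        have : (n:ℝ) ≤ (m:ℝ) := Nat.cast_le.2 hnm
        nlinarith)⟩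
  -- the solution
  set N : ℝ → ℕ := fun t => ⌈max t 0 / α⌉₊ with hN
  set B : ℝ → ℝ := fun t => Bn (N t + 1) t with hB
  have hBeq : ∀ n : ℕ, ∀ t ∈ Icc (0:ℝ) ((n:ℝ) * α), B t = Bn (n + 1) t := by
    intro n t ht
    have hmax : max t 0 = t := max_eq_left ht.1
    have hNle : N t ≤ n := by
      simp only [hN, hmax]
      exact Nat.ceil_le.2 ((div_le_iff₀ hα).2 (by linarith [ht.2]))
    have ht' : t ∈ Icc (0:ℝ) ((N t : ℝ) * α) := by
      refine ⟨ht.1, ?_⟩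
      have h1 : t / α ≤ (N t : ℝ) := by
        simp only [hN, hmax]; exact Nat.le_ceil _
      exact (div_le_iff₀ hα).1 h1
    exact hchain (N t) n hNle t ht'
  have hBc : ContinuousOn B (Ici (0:ℝ)) := by
    intro t₀ ht₀
    obtain ⟨n, hn⟩ := exists_nat_gt (t₀ / α)
    have hn' : t₀ < (n:ℝ) * α := by rwa [← div_lt_iff₀ hα]
    have hev : ∀ᶠ t in nhdsWithin t₀ (Ici (0:ℝ)), B t = Bn (n + 1) t := by
      have h1 : ∀ᶠ t in nhdsWithin t₀ (Ici (0:ℝ)), t < (n:ℝ) * α :=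
        eventually_nhdsWithin_of_eventually_nhds (Filter.Tendsto.eventually_lt_const hn' Filter.tendsto_id)
      filter_upwards [h1, self_mem_nhdsWithin] with t h1 h2
      exact hBeq n t ⟨h2, h1.le⟩
    exact ((hBnc (n + 1)).continuousWithinAt).congr_of_eventuallyEq hev
      (hBeq n t₀ ⟨ht₀, hn'.le⟩)
  have hBsol : ∀ t : ℝ, 0 ≤ t →
      B t = (∫ a in (0:ℝ)..t, bbar a t * B (t - a)) +
        ∫ a in Set.Ici t, bbar a t * φbar (a - t) := by
    intro t ht
    obtain ⟨n, hn⟩ := exists_nat_ge (t / α)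
    have htn : t ≤ (n:ℝ) * α := by rwa [← div_le_iff₀ hα]
    have h1 : B t = Bn (n + 2) t := by
      rw [hBeq n t ⟨ht, htn⟩]; exact hstab n t ⟨ht, htn⟩
    have h2 : Bn (n + 2) = Φ (Bn (n + 1)) := hBn_succ (n + 1)
    rw [h1, h2]
    have hmax : max t 0 = t := max_eq_left ht
    simp only [hΦ, hmax]
    rw [hshift t]
    congr 1
    apply intervalIntegral.integral_congr
    intro a ha
    rw [uIcc_of_le ht] at ha
    simp only
    congr 1
    exact (hBeq n (t - a) ⟨by linarith [ha.2], by linarith [ha.1]⟩).symm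
  refine ⟨⟨B, hBc, hBsol⟩, ?_⟩
  -- every continuous solution on `[0,α]`
  intro B' _ hB'sol t ht
  have h1 := hB'sol t ht.1
  have h2 : (∫ a in (0:ℝ)..t, bbar a t * B' (t - a)) = 0 := by
    rw [intervalIntegral.integral_congr_ae (g := fun _ => 0), intervalIntegral.integral_zero]
    have hae : ∀ᵐ a : ℝ, a ≠ α := by
      rw [ae_iff]
      simpa [not_not] using measure_singleton α
    filter_upwards [hae] with a haα hmem
    rw [uIoc_of_le ht.1] at hmem
    have haltα : a < α := lt_of_le_of_ne (le_trans hmem.2 ht.2) haα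
    rw [hbbar0 a t ht.1 (fun hmemα => absurd hmemα.1 (not_le.2 haltα)), zero_mul]
  rw [h2, zero_add] at h1
  rw [h1]
  have hind : ∀ a : ℝ, bbar a t * φbar (a - t) =
      (Icc α β).indicator (fun a => bbar a t * φbar (a - t)) a := by
    intro a
    by_cases hmem : a ∈ Icc α β
    · rw [indicator_of_mem hmem]
    · rw [indicator_of_notMem hmem, hbbar0 a t ht.1 hmem, zero_mul]
  calc ∫ a in Ici t, bbar a t * φbar (a - t)
      = ∫ a in Ici t, (Icc α β).indicator (fun a => bbar a t * φbar (a - t)) a := by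
        exact setIntegral_congr_fun measurableSet_Ici fun a _ => hind a
    _ = ∫ a in Ici t ∩ Icc α β, bbar a t * φbar (a - t) :=
        setIntegral_indicator measurableSet_Icc
    _ = ∫ a in Icc α β, bbar a t * φbar (a - t) := by
        rw [inter_eq_self_of_subset_right (Icc_subset_Ici_iff hαβ.le |>.2 ht.2)]
    _ = ∫ a in α..β, bbar a t * φbar (a - t) := by
        rw [intervalIntegral.integral_of_le hαβ.le, ← integral_Icc_eq_integral_Ioc]
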